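/- arXiv:1402.3693 — 2 statements merged into one kernel-verified Lean document; each statement's English description precedes it below -/
import Mathlib

section
/- Let R be a commutative ring, V a free R-module, and A = R ⊕ V the trivial square-zero extension of R by V, with R regarded as an A-module via the augmentation A → R, (r, v) ↦ r. Then for every natural number n there is an R-linear isomorphism Tor_n^A(R, R) ≅ V^{⊗n}, the n-fold tensor power of V over R (with V^{⊗0} = R). -/
open CategoryTheory TensorProduct MonoidalCategory
set_option linter.unusedSectionVars false
set_option synthInstance.maxHeartbeats 400000
set_option maxHeartbeats 1600000

noncomputable section

namespace TorSqZero

variable (R V : Type) [CommRing R] [AddCommGroup V] [Module R V]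

local instance instOp : Module Rᵐᵒᵖ V :=
  Module.compHom V ((RingHom.id R).fromOpposite fun x y => mul_comm x y)

local instance instCentral : IsCentralScalar R V := ⟨fun _ _ => rfl⟩

abbrev A : Type := TrivSqZeroExt R V

local instance instAug : Module (A R V) R :=
  Module.compHom R (TrivSqZeroExt.fstHom R R V).toRingHom

lemma aug_smul (a : A R V) (x : R) : a • x = a.fst * x := rfl

local instance instTower : IsScalarTower R (A R V) R :=
  ⟨fun r a x => by
    rw [aug_smul, aug_smul, TrivSqZeroExt.fst_smul, smul_eq_mul, smul_eq_mul, mul_assoc]⟩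

abbrev W (n : ℕ) : Type := TensorPower R n V

def pow1 : V ≃ₗ[R] W R V 1 := (PiTensorProduct.subsingletonEquiv (s := fun _ => V) (0 : Fin 1)).symm

def cons (n : ℕ) : V ⊗[R] W R V n ≃ₗ[R] W R V (n + 1) :=
  (TensorProduct.congr (pow1 R V) (LinearEquiv.refl R _)).trans
    ((TensorPower.mulEquiv).trans (TensorPower.cast R V (by omega)))

instance freeW [Module.Free R V] : ∀ n, Module.Free R (W R V n)
  | 0 => Module.Free.of_equiv (TensorPower.algebraMap₀ (R := R) (M := V))
  | (n+1) => letI := freeW n; Module.Free.of_equiv (cons R V n)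

/-- The bar resolution term `A ⊗ V^{⊗n}`. -/
abbrev P (n : ℕ) : Type := A R V ⊗[R] W R V n

/-- `v ⊗ w ↦ inr v ⊗ w`. -/
def ι (n : ℕ) : V ⊗[R] W R V n →ₗ[R] P R V n :=
  TensorProduct.map (TrivSqZeroExt.inrHom R V) LinearMap.id

@[simp] lemma ι_tmul (n : ℕ) (v : V) (w : W R V n) :
    ι R V n (v ⊗ₜ w) = TrivSqZeroExt.inr v ⊗ₜ w := rfl

def g (n : ℕ) : W R V (n + 1) →ₗ[R] P R V n :=
  ι R V n ∘ₗ (cons R V n).symm.toLinearMap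

/-- The bar differential. -/
def d (n : ℕ) : P R V (n + 1) →ₗ[A R V] P R V n :=
  (g R V n).liftBaseChange (A R V)

lemma d_tmul (n : ℕ) (a : A R V) (w : W R V (n + 1)) :
    d R V n (a ⊗ₜ w) = a • g R V n w := rfl

lemma mul_inr (a : A R V) (v : V) : a * TrivSqZeroExt.inr v = TrivSqZeroExt.inr (a.fst • v) := by
  ext
  · simp
  · simp

lemma smul_ι (n : ℕ) (a : A R V) (t : V ⊗[R] W R V n) :
    a • ι R V n t = a.fst • ι R V n t := by
  induction t with
  | zero => simp
  | add x y hx hy => rw [map_add, smul_add, smul_add, hx, hy]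
  | tmul v w =>
      rw [ι_tmul, smul_tmul', smul_tmul', smul_eq_mul, mul_inr]
      congr 1
      ext <;> simp

lemma smul_g (n : ℕ) (a : A R V) (w : W R V (n + 1)) :
    a • g R V n w = a.fst • g R V n w := by
  simpa [g] using smul_ι R V n a ((cons R V n).symm w)


/-- First projection `A ⊗ W → W`. -/
def p (n : ℕ) : P R V n →ₗ[R] W R V n :=
  (TensorProduct.lid R (W R V n)).toLinearMap ∘ₗ
    TensorProduct.map (TrivSqZeroExt.fstHom R R V).toLinearMap LinearMap.id

@[simp] lemma p_tmul (n : ℕ) (a : A R V) (w : W R V n) :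
    p R V n (a ⊗ₜ w) = a.fst • w := rfl

/-- Second projection `A ⊗ W → V ⊗ W`. -/
def q (n : ℕ) : P R V n →ₗ[R] V ⊗[R] W R V n :=
  TensorProduct.map (TrivSqZeroExt.sndHom R V) LinearMap.id

@[simp] lemma q_tmul (n : ℕ) (a : A R V) (w : W R V n) :
    q R V n (a ⊗ₜ w) = a.snd ⊗ₜ w := rfl

/-- `w ↦ 1 ⊗ w`. -/
def j (n : ℕ) : W R V n →ₗ[R] P R V n := TensorProduct.mk R (A R V) (W R V n) 1

@[simp] lemma j_apply (n : ℕ) (w : W R V n) : j R V n w = (1 : A R V) ⊗ₜ w := rfl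

@[simp] lemma p_ι (n : ℕ) (t : V ⊗[R] W R V n) : p R V n (ι R V n t) = 0 := by
  induction t with
  | zero => simp
  | add x y hx hy => rw [map_add, map_add, hx, hy, add_zero]
  | tmul v w => simp

@[simp] lemma q_ι (n : ℕ) (t : V ⊗[R] W R V n) : q R V n (ι R V n t) = t := by
  induction t with
  | zero => simp
  | add x y hx hy => rw [map_add, map_add, hx, hy]
  | tmul v w => simp

@[simp] lemma p_j (n : ℕ) (w : W R V n) : p R V n (j R V n w) = w := by simp

@[simp] lemma q_j (n : ℕ) (w : W R V n) : q R V n (j R V n w) = 0 := by simp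

lemma decomp (n : ℕ) (x : P R V n) : j R V n (p R V n x) + ι R V n (q R V n x) = x := by
  induction x using TensorProduct.induction_on with
  | zero => simp
  | add x y hx hy =>
      rw [map_add, map_add, map_add, map_add]
      rw [show ∀ (a b c e : P R V n), a + b + (c + e) = a + c + (b + e) from fun a b c e => by
        abel]
      rw [hx, hy]
  | tmul a w =>
      rw [p_tmul, q_tmul, j_apply, ι_tmul, tmul_smul, smul_tmul', ← add_tmul]
      congr 1
      ext <;> simp

/-- The differential in terms of the projection. -/
lemma d_eq (n : ℕ) (x : P R V (n + 1)) :
    d R V n x = ι R V n ((cons R V n).symm (p R V (n + 1) x)) := by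
  induction x using TensorProduct.induction_on with
  | zero => simp
  | add x y hx hy => rw [map_add, map_add, map_add, map_add, hx, hy]
  | tmul a w =>
      rw [d_tmul, smul_g, p_tmul, g, LinearMap.comp_apply, map_smul, map_smul]
      rfl

lemma d_j (n : ℕ) (w : W R V (n + 1)) :
    d R V n (j R V (n + 1) w) = ι R V n ((cons R V n).symm w) := by
  rw [d_eq, p_j]

lemma d_d (n : ℕ) (x : P R V (n + 2)) : d R V n (d R V (n + 1) x) = 0 := by
  rw [d_eq, d_eq, p_ι, map_zero, map_zero]


/-- The augmentation `A ⊗ W 0 → R`. -/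
def ε : P R V 0 →ₗ[A R V] R :=
  ((TensorPower.algebraMap₀ (R := R) (M := V)).symm.toLinearMap).liftBaseChange (A R V)

lemma ε_tmul (a : A R V) (w : W R V 0) :
    ε R V (a ⊗ₜ w) = a.fst * (TensorPower.algebraMap₀ (R := R) (M := V)).symm w := rfl

lemma ε_ι (t : V ⊗[R] W R V 0) : ε R V (ι R V 0 t) = 0 := by
  induction t using TensorProduct.induction_on with
  | zero => simp
  | add x y hx hy => rw [map_add, map_add, hx, hy, add_zero]
  | tmul v w => rw [ι_tmul, ε_tmul]; simp

lemma ε_eq (x : P R V 0) :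
    ε R V x = (TensorPower.algebraMap₀ (R := R) (M := V)).symm (p R V 0 x) := by
  induction x using TensorProduct.induction_on with
  | zero => simp
  | add x y hx hy => rw [map_add, map_add, map_add, hx, hy]
  | tmul a w => rw [ε_tmul, p_tmul, map_smul, smul_eq_mul]

lemma ε_surjective : Function.Surjective (ε R V) := fun r =>
  ⟨j R V 0 (TensorPower.algebraMap₀ (R := R) (M := V) r), by
    rw [ε_eq, p_j, LinearEquiv.symm_apply_apply]⟩

lemma ε_d (x : P R V 1) : ε R V (d R V 0 x) = 0 := by
  rw [d_eq, ε_ι]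

/-- kernel of the augmentation/differential is in the image of the next differential. -/
lemma exact_step (n : ℕ) (x : P R V n) (hx : p R V n x = 0) :
    d R V n (j R V (n + 1) (cons R V n (q R V n x))) = x := by
  rw [d_j, LinearEquiv.symm_apply_apply]
  conv_rhs => rw [← decomp R V n x]
  rw [hx, map_zero, zero_add]

lemma ker_d (n : ℕ) (x : P R V (n + 1)) (hx : d R V n x = 0) : p R V (n + 1) x = 0 := by
  rw [d_eq] at hx
  have := congrArg (q R V n) hx
  rw [q_ι, map_zero] at this
  have := congrArg (cons R V n) this
  rw [LinearEquiv.apply_symm_apply, map_zero] at this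
  exact this

lemma ker_ε (x : P R V 0) (hx : ε R V x = 0) : p R V 0 x = 0 := by
  rw [ε_eq] at hx
  simpa using congrArg (TensorPower.algebraMap₀ (R := R) (M := V)) hx


/-- The bar resolution complex. -/
def cplx : ChainComplex (ModuleCat (A R V)) ℕ :=
  ChainComplex.of (fun n => ModuleCat.of (A R V) (P R V n))
    (fun n => ModuleCat.ofHom (d R V n))
    (fun n => ModuleCat.hom_ext (LinearMap.ext fun x => d_d R V n x))

@[simp] lemma cplx_d (n : ℕ) :
    (cplx R V).d (n + 1) n = ModuleCat.ofHom (d R V n) :=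
  ChainComplex.of_d (fun n => ModuleCat.of (A R V) (P R V n)) (fun n => ModuleCat.ofHom (d R V n)) n

/-- The augmentation as a chain map to the single complex. -/
def π : cplx R V ⟶ (ChainComplex.single₀ (ModuleCat (A R V))).obj (ModuleCat.of (A R V) R) :=
  (ChainComplex.toSingle₀Equiv _ _).symm
    ⟨ModuleCat.ofHom (ε R V), by
      rw [cplx_d]
      exact ModuleCat.hom_ext (LinearMap.ext fun x => ε_d R V x)⟩

instance cplx_projective (n : ℕ) [Module.Free R V] :
    CategoryTheory.Projective ((cplx R V).X n) := by
  have : Module.Projective (A R V) (P R V n) := Module.Projective.of_basis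
    (Module.Free.chooseBasis (A R V) (P R V n))
  exact (IsProjective.iff_projective (P R V n)).mp this

lemma cplx_exactAt_succ (n : ℕ) : (cplx R V).ExactAt (n + 1) := by
  rw [HomologicalComplex.exactAt_iff' _ (n + 2) (n + 1) n (by simp) (by simp)]
  rw [ShortComplex.moduleCat_exact_iff]
  show ∀ (x : (cplx R V).X (n + 1)), ((cplx R V).d (n + 1) n) x = 0 →
    ∃ y : (cplx R V).X (n + 2), ((cplx R V).d (n + 2) (n + 1)) y = x
  rw [cplx_d, cplx_d]
  intro (x : P R V (n + 1)) hx
  refine ⟨j R V (n + 2) (cons R V (n + 1) (q R V (n + 1) x)), ?_⟩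
  exact exact_step R V (n + 1) x (ker_d R V n x hx)


lemma π_f_zero : (π R V).f 0 = ModuleCat.ofHom (ε R V) :=
  ChainComplex.toSingle₀Equiv_symm_apply_f_zero _ _

/-- The bar resolution is a projective resolution of `R` over `A`. -/
def resolution [Module.Free R V] :
    CategoryTheory.ProjectiveResolution (ModuleCat.of (A R V) R) where
  complex := cplx R V
  π := π R V
  quasiIso := ⟨fun n => by
    cases n with
    | zero =>
      rw [ChainComplex.quasiIsoAt₀_iff, ShortComplex.quasiIso_iff_of_zeros']
      · constructor
        · rw [ShortComplex.moduleCat_exact_iff]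
          show ∀ (x : (cplx R V).X 0), ((π R V).f 0) x = 0 →
            ∃ y : (cplx R V).X 1, ((cplx R V).d 1 0) y = x
          rw [π_f_zero, cplx_d]
          intro x hx
          exact ⟨j R V 1 (cons R V 0 (q R V 0 x)),
            exact_step R V 0 x (ker_ε R V x hx)⟩
        · show Epi ((π R V).f 0)
          rw [π_f_zero]
          exact (ModuleCat.epi_iff_surjective (f := ModuleCat.ofHom (ε R V))).mpr (ε_surjective R V)
      · exact (cplx R V).shape _ _ (by simp)
      · rfl
      · rfl
    | succ m =>
      rw [quasiIsoAt_iff_exactAt']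
      · exact cplx_exactAt_succ R V m
      · apply ChainComplex.exactAt_succ_single_obj⟩


section TorComputation

/-- The functor `R ⊗_A -`. -/
abbrev F : ModuleCat (A R V) ⥤ ModuleCat (A R V) :=
  (tensoringLeft (ModuleCat (A R V))).obj (ModuleCat.of (A R V) R)

/-- The complex computing Tor. -/
def Kc : ChainComplex (ModuleCat (A R V)) ℕ :=
  ((F R V).mapHomologicalComplex _).obj (cplx R V)

lemma tmul_iota_zero (n : ℕ) (r : R) (t : V ⊗[R] W R V n) :
    (r ⊗ₜ[A R V] (ι R V n t) : TensorProduct (A R V) R (P R V n)) = 0 := by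
  induction t using TensorProduct.induction_on with
  | zero => simp
  | add x y hx hy => rw [map_add, tmul_add, hx, hy, add_zero]
  | tmul v w =>
      rw [ι_tmul]
      have h1 : (TrivSqZeroExt.inr v ⊗ₜ w : P R V n)
          = (TrivSqZeroExt.inr v : A R V) • ((1 : A R V) ⊗ₜ w : P R V n) := by
        rw [smul_tmul', smul_eq_mul, mul_one]
      rw [h1, ← TensorProduct.smul_tmul]
      have h2 : (TrivSqZeroExt.inr v : A R V) • r = 0 := by
        rw [aug_smul, TrivSqZeroExt.fst_inr, zero_mul]
      rw [h2, zero_tmul]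

lemma Fmap_d_zero (n : ℕ) : (F R V).map (ModuleCat.ofHom (d R V n)) = 0 := by
  suffices h : ∀ z : TensorProduct (A R V) R (P R V (n + 1)),
      ((F R V).map (ModuleCat.ofHom (d R V n))) z = 0 from ModuleCat.hom_ext (LinearMap.ext h)
  intro z
  induction z using TensorProduct.induction_on with
  | zero => rw [map_zero]
  | add x y hx hy => rw [map_add, hx, hy, add_zero]
  | tmul r x =>
      erw [ModuleCat.MonoidalCategory.whiskerLeft_apply]
      show (r ⊗ₜ[A R V] (d R V n x) : TensorProduct (A R V) R (P R V n)) = 0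
      rw [d_eq, tmul_iota_zero]

lemma Kc_d_zero (i j : ℕ) : (Kc R V).d i j = 0 := by
  show (F R V).map ((cplx R V).d i j) = 0
  rcases eq_or_ne i (j + 1) with h | h
  · subst h
    rw [cplx_d]; exact Fmap_d_zero R V j
  · rw [(cplx R V).shape i j (by simpa using fun h' => h h'.symm), Functor.map_zero]

/-- Homology of the zero-differential complex. -/
def KcHomologyIso (n : ℕ) : (Kc R V).homology n ≅ (Kc R V).X n :=
  (ShortComplex.LeftHomologyData.ofZeros ((Kc R V).sc n)
    (Kc_d_zero R V _ _) (Kc_d_zero R V _ _)).homologyIso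

variable [Module.Free R V]

/-- Tor as homology of the tensored bar complex. -/
def torIso (n : ℕ) :
    ((Tor (ModuleCat (A R V)) n).obj (ModuleCat.of (A R V) R)).obj (ModuleCat.of (A R V) R) ≅
      (Kc R V).X n :=
  (resolution R V).isoLeftDerivedObj (F R V) n ≪≫ KcHomologyIso R V n


lemma p_smul (n : ℕ) (a : A R V) (x : P R V n) :
    p R V n (a • x) = a.fst • p R V n x := by
  induction x using TensorProduct.induction_on with
  | zero => simp
  | add x y hx hy => rw [smul_add, map_add, map_add, hx, hy, smul_add]
  | tmul b w =>
      rw [smul_tmul', smul_eq_mul, p_tmul, p_tmul, TrivSqZeroExt.fst_mul, mul_smul]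

/-- The forward map `R ⊗_A (A ⊗_R W) → W`. -/
def fwd (n : ℕ) : TensorProduct (A R V) R (P R V n) →+ W R V n :=
  TensorProduct.liftAddHom
    (AddMonoidHom.mk' (fun r => AddMonoidHom.mk'
        (fun x => r • p R V n x) (fun x y => by simp [map_add, smul_add]))
      (fun r s => by ext x; exact add_smul r s _))
    (fun a r x => by
      show (a • r) • p R V n x = r • p R V n (a • x)
      rw [p_smul, aug_smul, mul_smul]
      exact smul_comm _ _ _)

lemma fwd_tmul (n : ℕ) (r : R) (x : P R V n) :
    fwd R V n (r ⊗ₜ x) = r • p R V n x := rfl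

/-- The backward map. -/
def bwd (n : ℕ) : W R V n →+ TensorProduct (A R V) R (P R V n) :=
  AddMonoidHom.mk' (fun w => (1 : R) ⊗ₜ[A R V] (((1 : A R V) ⊗ₜ[R] w : P R V n)))
    (fun w w' => by simp [tmul_add])

lemma smul_one_A (s : R) : s • (1 : A R V) = TrivSqZeroExt.inl s := by
  ext
  · simp
  · simp

lemma bwd_smul_w (n : ℕ) (s : R) (w : W R V n) :
    bwd R V n (s • w) = s ⊗ₜ[A R V] (((1 : A R V) ⊗ₜ[R] w : P R V n)) := by
  show (1 : R) ⊗ₜ[A R V] (((1 : A R V) ⊗ₜ[R] (s • w) : P R V n)) = _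
  rw [tmul_smul, smul_tmul', smul_one_A]
  have h1 : (TrivSqZeroExt.inl s ⊗ₜ w : P R V n)
      = (TrivSqZeroExt.inl s : A R V) • (((1 : A R V) ⊗ₜ[R] w : P R V n)) := by
    rw [smul_tmul', smul_eq_mul, mul_one]
  rw [h1, ← TensorProduct.smul_tmul]
  rw [aug_smul, TrivSqZeroExt.fst_inl, mul_one]

lemma bwd_fwd (n : ℕ) (z : TensorProduct (A R V) R (P R V n)) :
    bwd R V n (fwd R V n z) = z := by
  induction z using TensorProduct.induction_on with
  | zero => rw [map_zero, map_zero]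
  | add x y hx hy => rw [map_add, map_add, hx, hy]
  | tmul r x =>
      rw [fwd_tmul]
      induction x using TensorProduct.induction_on with
      | zero => rw [map_zero, smul_zero, map_zero, tmul_zero]
      | add x y hx hy => rw [map_add, smul_add, map_add, hx, hy, tmul_add]
      | tmul a w =>
          rw [p_tmul, ← mul_smul, bwd_smul_w]
          have h1 : (a ⊗ₜ w : P R V n) = a • (((1 : A R V) ⊗ₜ[R] w : P R V n)) := by
            rw [smul_tmul', smul_eq_mul, mul_one]
          rw [h1, ← TensorProduct.smul_tmul, aug_smul, mul_comm]

lemma fwd_bwd (n : ℕ) (w : W R V n) : fwd R V n (bwd R V n w) = w := by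
  show (1 : R) • p R V n (((1 : A R V) ⊗ₜ[R] w : P R V n)) = w
  rw [p_tmul, one_smul, TrivSqZeroExt.fst_one, one_smul]

lemma fwd_smul (n : ℕ) (a : A R V) (z : TensorProduct (A R V) R (P R V n)) :
    fwd R V n (a • z) = a.fst • fwd R V n z := by
  induction z using TensorProduct.induction_on with
  | zero => rw [smul_zero, map_zero, smul_zero]
  | add x y hx hy => rw [smul_add, map_add, map_add, hx, hy, smul_add]
  | tmul r x =>
      rw [smul_tmul', fwd_tmul, fwd_tmul, aug_smul, mul_smul]


/-- The main equivalence: `Tor_n^A(R, R) ≃ V^{⊗n}` as `R`-modules. -/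
def mainEquiv (n : ℕ) :
    letI M : ModuleCat (A R V) := ModuleCat.of (A R V) R
    letI T := ((Tor (ModuleCat (A R V)) n).obj M).obj M
    letI : Module R T := Module.compHom T (algebraMap R (A R V))
    T ≃ₗ[R] TensorPower R n V := by
  letI M : ModuleCat (A R V) := ModuleCat.of (A R V) R
  letI T := ((Tor (ModuleCat (A R V)) n).obj M).obj M
  letI : Module R T := Module.compHom T (algebraMap R (A R V))
  let e : (T : Type) ≃ₗ[A R V] TensorProduct (A R V) R (P R V n) := (torIso R V n).toLinearEquiv
  exact
    { toFun := fun t => fwd R V n (e t)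
      invFun := fun w => e.symm (bwd R V n w)
      left_inv := fun t => by
        show e.symm (bwd R V n (fwd R V n (e t))) = t
        rw [bwd_fwd, LinearEquiv.symm_apply_apply]
      right_inv := fun w => by
        show fwd R V n (e (e.symm (bwd R V n w))) = w
        rw [LinearEquiv.apply_symm_apply, fwd_bwd]
      map_add' := fun x y => by
        show fwd R V n (e (x + y)) = fwd R V n (e x) + fwd R V n (e y)
        rw [map_add, map_add]
      map_smul' := fun r t => by
        show fwd R V n (e ((algebraMap R (A R V) r) • t)) = r • fwd R V n (e t)
        rw [map_smul, fwd_smul, TrivSqZeroExt.algebraMap_eq_inl, TrivSqZeroExt.fst_inl] }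

end TorComputation

end TorSqZero

/-- The (ungraded) module content of Proposition 2.2.1 of the paper:
for the trivial square-zero extension `A = R ⊕ V` of a commutative ring `R`
by a free `R`-module `V`, with `R` an `A`-module via the augmentation
`(r, v) ↦ r`, one has `Tor_n^A(R, R) ≅ V^{⊗ n}` as `R`-modules. -/
theorem tor_trivSqZeroExt_iso_tensorPower
    (R V : Type) [CommRing R] [AddCommGroup V] [Module R V] [Module.Free R V]
    (n : ℕ) :
    letI : Module Rᵐᵒᵖ V :=
      Module.compHom V ((RingHom.id R).fromOpposite fun x y => mul_comm x y)
    letI : IsCentralScalar R V := ⟨fun _ _ => rfl⟩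
    letI A := TrivSqZeroExt R V
    letI : Module A R := Module.compHom R (TrivSqZeroExt.fstHom R R V).toRingHom
    letI M : ModuleCat A := ModuleCat.of A R
    letI T := ((Tor (ModuleCat A) n).obj M).obj M
    letI : Module R T := Module.compHom T (algebraMap R A)
    Nonempty (T ≃ₗ[R] TensorPower R n V) := by
  exact ⟨TorSqZero.mainEquiv R V n⟩
end
end

section
/- Let p be an odd prime and k₀ ≥ 1 a natural number, and set n = (p−1)·k₀ (an even positive integer). Then the p-adic valuation of the rational number B_n / n, where B_n is the n-th Bernoulli number, equals −(1 + v_p(k₀)); that is, padicValRat p (bernoulli n / n) = −(1 + padicValNat p k₀). -/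
open Finset

private lemma aux_three_pow (v : ℕ) (hv : 1 ≤ v) : v + 2 ≤ 3 ^ v := by
  induction v with
  | zero => omega
  | succ n ih =>
    rcases Nat.eq_zero_or_pos n with rfl | hn
    · norm_num
    · have h := ih hn
      have h3 : 3 ^ (n + 1) = 3 * 3 ^ n := by ring
      omega

/-- valuation bound: `v_p(e) ≤ e - 2` for `e ≥ 2`, `p ≥ 3`. -/
private lemma aux_val_le (p e : ℕ) (hp : p.Prime) (hp3 : 3 ≤ p) (he : 2 ≤ e) :
    padicValNat p e ≤ e - 2 := by
  haveI : Fact p.Prime := ⟨hp⟩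
  set v := padicValNat p e with hv
  rcases Nat.eq_zero_or_pos v with h0 | h1
  · omega
  · have hpe : p ^ v ∣ e := pow_padicValNat_dvd
    have hle : p ^ v ≤ e := Nat.le_of_dvd (by omega) hpe
    have h3 : 3 ^ v ≤ p ^ v := Nat.pow_le_pow_left hp3 v
    have := aux_three_pow v h1
    omega

/-- Norm of a power of `p`. -/
private lemma aux_norm_pow (p k : ℕ) (hp : p.Prime) :
    padicNorm p ((p : ℚ) ^ k) = (p : ℚ) ^ (-(k : ℤ)) := by
  haveI : Fact p.Prime := ⟨hp⟩
  have hp0 : (0 : ℚ) < p := by exact_mod_cast hp.pos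
  rw [padicNorm.eq_zpow_of_nonzero (by positivity)]
  congr 1
  rw [padicValRat.pow _, padicValRat.self hp.one_lt]
  ring

/-- Norm bound for `p^(e-1)/e`. -/
private lemma aux_norm_ppow_div (p e : ℕ) (hp : p.Prime) (hp3 : 3 ≤ p) (he : 2 ≤ e) :
    padicNorm p ((p : ℚ) ^ (e - 1) / (e : ℚ)) ≤ (p : ℚ)⁻¹ := by
  haveI : Fact p.Prime := ⟨hp⟩
  have hp1 : (1 : ℚ) < p := by exact_mod_cast hp.one_lt
  have he0 : (e : ℚ) ≠ 0 := by positivity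
  have hden : padicNorm p (e : ℚ) = (p : ℚ) ^ (-(padicValNat p e : ℤ)) := by
    rw [padicNorm.eq_zpow_of_nonzero he0]
    congr 2
    exact_mod_cast padicValRat.of_nat (p := p) (n := e)
  rw [padicNorm.div, aux_norm_pow p (e - 1) hp, hden, ← zpow_sub₀ (by positivity)]
  have hval := aux_val_le p e hp hp3 he
  have hexp : (-(e - 1 : ℕ) : ℤ) - -(padicValNat p e : ℤ) ≤ -1 := by
    have h1 : (padicValNat p e : ℤ) ≤ ((e - 2 : ℕ) : ℤ) := by exact_mod_cast hval
    omega
  calc (p : ℚ) ^ ((-(e - 1 : ℕ) : ℤ) - -(padicValNat p e : ℤ))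
      ≤ (p : ℚ) ^ (-1 : ℤ) := zpow_le_zpow_right₀ (le_of_lt hp1) hexp
    _ = (p : ℚ)⁻¹ := by simp

/-- Key decomposition from Faulhaber: `p * B m = S - T`. -/
private lemma aux_faulhaber (p m : ℕ) (hp : p.Prime) :
    (p : ℚ) * bernoulli m =
      (∑ k ∈ range p, (k : ℚ) ^ m) -
        ∑ i ∈ range m, bernoulli i * ((m + 1).choose i) * (p : ℚ) ^ (m + 1 - i) / (m + 1) := by
  have h := sum_range_pow p m
  rw [Finset.sum_range_succ] at h
  have hterm : bernoulli m * ((m + 1).choose m) * (p : ℚ) ^ (m + 1 - m) / ((m : ℚ) + 1)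
      = (p : ℚ) * bernoulli m := by
    have h1 : (m + 1).choose m = m + 1 := Nat.choose_succ_self_right m
    have h2 : m + 1 - m = 1 := by omega
    rw [h1, h2]
    have hm1 : ((m : ℚ) + 1) ≠ 0 := by positivity
    push_cast
    field_simp
  push_cast at h hterm ⊢
  rw [hterm] at h
  linarith

/-- The product identity `C(m+1,i)·(m+1-i) = (m+1)·C(m,i)` in ℚ, for `i ≤ m`. -/
private lemma aux_choose_ratio (m i : ℕ) (hi : i ≤ m) :
    (((m + 1).choose i : ℚ)) * ((m : ℚ) + 1 - i) = ((m : ℚ) + 1) * (m.choose i : ℚ) := by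
  have key : (m + 1) * m.choose i = (m + 1).choose i * (m + 1 - i) := by
    have h1 : m.choose i = m.choose (m - i) := (Nat.choose_symm hi).symm
    have h2 : (m + 1).choose ((m - i) + 1) * ((m - i) + 1) = (m + 1) * m.choose (m - i) :=
      (Nat.add_one_mul_choose_eq m (m - i)).symm
    have h3 : (m - i) + 1 = (m + 1) - i := by omega
    have h4 : (m + 1).choose ((m + 1) - i) = (m + 1).choose i := Nat.choose_symm (by omega)
    rw [h3, h4] at h2
    rw [h1, ← h2]
  have hc := congrArg (fun n : ℕ => (n : ℚ)) key
  push_cast at hc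
  have hcast : ((m + 1 - i : ℕ) : ℚ) = (m : ℚ) + 1 - i := by
    push_cast [Nat.cast_sub (show i ≤ m + 1 by omega)]
    ring
  rw [hcast] at hc
  linarith

/-- Bound on the lower-order Faulhaber terms. -/
private lemma aux_term_bound (p m i : ℕ) (hp : p.Prime) (hp3 : 3 ≤ p) (hi : i < m)
    (hint : padicNorm p ((p : ℚ) * bernoulli i) ≤ 1) :
    padicNorm p (bernoulli i * ((m + 1).choose i) * (p : ℚ) ^ (m + 1 - i) / (m + 1))
      ≤ (p : ℚ)⁻¹ := by
  haveI : Fact p.Prime := ⟨hp⟩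
  have hi' : i ≤ m := le_of_lt hi
  set e : ℕ := m + 1 - i with he_def
  have he2 : 2 ≤ e := by omega
  have hcast : ((e : ℕ) : ℚ) = (m : ℚ) + 1 - i := by
    rw [he_def]
    push_cast [Nat.cast_sub (show i ≤ m + 1 by omega)]
    ring
  have hiq : (i : ℚ) ≤ m := by exact_mod_cast hi'
  have he0 : ((e : ℕ) : ℚ) ≠ 0 := by rw [hcast]; linarith
  have hm1 : ((m : ℚ) + 1) ≠ 0 := by positivity
  have heq : bernoulli i * ((m + 1).choose i) * (p : ℚ) ^ (m + 1 - i) / (m + 1)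
      = ((p : ℚ) * bernoulli i) * (m.choose i : ℚ) * ((p : ℚ) ^ (e - 1) / (e : ℚ)) := by
    have hratio := aux_choose_ratio m i hi'
    have hpow : (p : ℚ) ^ (m + 1 - i) = (p : ℚ) * (p : ℚ) ^ (e - 1) := by
      have hee : m + 1 - i = (e - 1) + 1 := by omega
      rw [hee, pow_succ]
      ring
    rw [hpow]
    have hq : (((m + 1).choose i : ℕ) : ℚ) / ((m : ℚ) + 1) = ((m.choose i : ℕ) : ℚ) / (e : ℚ) := by
      rw [div_eq_div_iff hm1 he0, hcast]
      linear_combination hratio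
    calc _ = ((p : ℚ) * bernoulli i) * (p : ℚ) ^ (e - 1) * ((((m + 1).choose i : ℕ) : ℚ) / ((m : ℚ) + 1)) := by ring
      _ = _ := by rw [hq]; ring
  rw [heq, padicNorm.mul, padicNorm.mul]
  have h2 : padicNorm p (m.choose i : ℚ) ≤ 1 := padicNorm.of_nat _
  have h3 : padicNorm p ((p : ℚ) ^ (e - 1) / (e : ℚ)) ≤ (p : ℚ)⁻¹ :=
    aux_norm_ppow_div p e hp hp3 he2
  have hn1 := padicNorm.nonneg (p := p) ((p : ℚ) * bernoulli i)
  have hn2 := padicNorm.nonneg (p := p) (m.choose i : ℚ)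
  have hn3 := padicNorm.nonneg (p := p) ((p : ℚ) ^ (e - 1) / (e : ℚ))
  calc padicNorm p ((p : ℚ) * bernoulli i) * padicNorm p (m.choose i : ℚ) *
        padicNorm p ((p : ℚ) ^ (e - 1) / (e : ℚ))
      ≤ 1 * 1 * (p : ℚ)⁻¹ :=
        mul_le_mul (mul_le_mul hint h2 hn2 (by linarith)) h3 hn3 (by norm_num)
    _ = (p : ℚ)⁻¹ := by ring

/-- Integrality: `p * B m` has `padicNorm ≤ 1`. -/
private lemma aux_integral (p : ℕ) (hp : p.Prime) (hp3 : 3 ≤ p) (m : ℕ) :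
    padicNorm p ((p : ℚ) * bernoulli m) ≤ 1 := by
  haveI : Fact p.Prime := ⟨hp⟩
  induction m using Nat.strong_induction_on with
  | _ m ih =>
    rw [aux_faulhaber p m hp]
    refine le_trans (padicNorm.sub (p := p)) (max_le ?_ ?_)
    · have hS : (∑ k ∈ range p, (k : ℚ) ^ m) = ((∑ k ∈ range p, k ^ m : ℕ) : ℚ) := by
        push_cast; ring
      rw [hS]
      exact padicNorm.of_nat _
    · refine le_trans (padicNorm.sum_le' (fun i hi =>
        aux_term_bound p m i hp hp3 (Finset.mem_range.mp hi) (ih i (Finset.mem_range.mp hi)))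
        (by positivity)) ?_
      have hp1 : (1 : ℚ) ≤ p := by exact_mod_cast hp.one_le
      exact inv_le_one_of_one_le₀ hp1

/-- Fermat: the power sum over `range p` is not divisible by `p` when `(p-1) ∣ m`, `m ≥ 1`. -/
private lemma aux_power_sum (p m : ℕ) (hp : p.Prime) (hdvd : (p - 1) ∣ m) (hm : 1 ≤ m) :
    ¬ p ∣ ∑ k ∈ range p, k ^ m := by
  haveI : Fact p.Prime := ⟨hp⟩
  intro hdvd'
  have h0 : ((∑ k ∈ range p, k ^ m : ℕ) : ZMod p) = 0 :=
    (ZMod.natCast_eq_zero_iff _ _).mpr hdvd'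
  have hsum : ((∑ k ∈ range p, k ^ m : ℕ) : ZMod p) = ∑ k ∈ range p, (k : ZMod p) ^ m := by
    push_cast; ring
  have huniv : ∑ k ∈ range p, (k : ZMod p) ^ m = ∑ x : ZMod p, x ^ m := by
    refine Finset.sum_nbij' (fun k => ((k : ℕ) : ZMod p)) (fun x => x.val) ?_ ?_ ?_ ?_ ?_
    · intro a _; exact Finset.mem_univ _
    · intro a _; exact Finset.mem_range.mpr (ZMod.val_lt a)
    · intro a ha; exact ZMod.val_cast_of_lt (Finset.mem_range.mp ha)
    · intro a _; exact ZMod.natCast_zmod_val a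
    · intro a _; rfl
  have hsub : ∑ x : ZMod p, x ^ m = ∑ x ∈ (Finset.univ \ {(0 : ZMod p)}), x ^ m := by
    symm
    apply Finset.sum_subset (Finset.sdiff_subset)
    intro x _ hx
    have hx0 : x = 0 := by
      by_contra h
      exact hx (Finset.mem_sdiff.mpr ⟨Finset.mem_univ _, by simpa using h⟩)
    rw [hx0, zero_pow (by omega : m ≠ 0)]
  have hone : ∑ x ∈ (Finset.univ \ {(0 : ZMod p)}), x ^ m
      = ∑ x ∈ (Finset.univ \ {(0 : ZMod p)}), (1 : ZMod p) := by
    apply Finset.sum_congr rfl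
    intro x hx
    have hx0 : x ≠ 0 := by
      rcases Finset.mem_sdiff.mp hx with ⟨-, h⟩
      simpa using h
    obtain ⟨c, rfl⟩ := hdvd
    rw [pow_mul, ZMod.pow_card_sub_one_eq_one hx0, one_pow]
  have hcard : (Finset.univ \ {(0 : ZMod p)}).card = p - 1 := by
    rw [Finset.card_sdiff_of_subset (by simp), Finset.card_univ, ZMod.card, Finset.card_singleton]
  have hp2 : 2 ≤ p := hp.two_le
  have hval : ((p - 1 : ℕ) : ZMod p) ≠ 0 := by
    rw [Ne, ZMod.natCast_eq_zero_iff]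
    intro hd
    have := Nat.le_of_dvd (by omega) hd
    omega
  apply hval
  rw [← hcard]
  have : (∑ x ∈ (Finset.univ \ {(0 : ZMod p)}), (1 : ZMod p))
      = ((Finset.univ \ {(0 : ZMod p)}).card : ZMod p) := by
    rw [Finset.sum_const, nsmul_eq_mul, mul_one]
  rw [← this, ← hone, ← hsub, ← huniv, ← hsum, h0]

/-- Von Staudt–Clausen (valuation form): `v_p(B m) = -1` when `(p-1) ∣ m`, `m ≥ 1`. -/
private lemma aux_val_bernoulli (p m : ℕ) (hp : p.Prime) (hp3 : 3 ≤ p)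
    (hdvd : (p - 1) ∣ m) (hm : 1 ≤ m) :
    bernoulli m ≠ 0 ∧ padicValRat p (bernoulli m) = -1 := by
  haveI : Fact p.Prime := ⟨hp⟩
  have hp0 : (0 : ℚ) < p := by exact_mod_cast hp.pos
  have hp1 : (1 : ℚ) < p := by exact_mod_cast hp.one_lt
  have hS : padicNorm p (∑ k ∈ range p, (k : ℚ) ^ m) = 1 := by
    have hS1 : (∑ k ∈ range p, (k : ℚ) ^ m) = ((∑ k ∈ range p, k ^ m : ℕ) : ℚ) := by
      push_cast; ring
    rw [hS1, padicNorm.nat_eq_one_iff]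
    exact aux_power_sum p m hp hdvd hm
  have hT : padicNorm p (∑ i ∈ range m,
      bernoulli i * ((m + 1).choose i) * (p : ℚ) ^ (m + 1 - i) / (m + 1)) ≤ (p : ℚ)⁻¹ :=
    padicNorm.sum_le' (fun i hi =>
      aux_term_bound p m i hp hp3 (Finset.mem_range.mp hi)
        (aux_integral p hp hp3 i)) (by positivity)
  have hTlt : padicNorm p (∑ i ∈ range m,
      bernoulli i * ((m + 1).choose i) * (p : ℚ) ^ (m + 1 - i) / (m + 1)) < 1 := by
    have : (p : ℚ)⁻¹ < 1 := by
      rw [inv_lt_one_iff₀]; right; exact hp1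
    linarith
  have hne : padicNorm p (∑ k ∈ range p, (k : ℚ) ^ m) ≠ padicNorm p
      (-∑ i ∈ range m, bernoulli i * ((m + 1).choose i) * (p : ℚ) ^ (m + 1 - i) / (m + 1)) := by
    rw [hS, padicNorm.neg]
    intro h
    rw [← h] at hTlt
    exact lt_irrefl 1 hTlt
  have hmain : padicNorm p ((p : ℚ) * bernoulli m) = 1 := by
    rw [aux_faulhaber p m hp, sub_eq_add_neg, padicNorm.add_eq_max_of_ne hne, hS,
      padicNorm.neg]
    exact max_eq_left (le_of_lt hTlt)
  have hB0 : bernoulli m ≠ 0 := by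
    intro h
    rw [h, mul_zero, padicNorm.zero] at hmain
    norm_num at hmain
  refine ⟨hB0, ?_⟩
  rw [padicNorm.mul, padicNorm.padicNorm_p hp.one_lt,
    padicNorm.eq_zpow_of_nonzero hB0] at hmain
  have hmain2 : (p : ℚ) ^ ((-1 : ℤ) + -padicValRat p (bernoulli m)) = (p : ℚ) ^ (0 : ℤ) := by
    rw [zpow_add₀ (ne_of_gt hp0), zpow_neg_one, zpow_zero]
    exact hmain
  have hinj := zpow_right_injective₀ (a := (p : ℚ)) hp0 (ne_of_gt hp1)
  have := hinj hmain2
  omega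

/-- Von Staudt–Clausen content of §1.1 of the paper: for an odd prime `p` and
`n = (p-1)·k₀`, the `p`-adic valuation of the Bernoulli quotient `B_n / n`
equals `-(1 + v_p(k₀))`. -/
theorem padicValRat_bernoulli_quotient (p : ℕ) (hp : p.Prime) (hodd : Odd p)
    (k₀ : ℕ) (hk₀ : 1 ≤ k₀) :
    padicValRat p (bernoulli ((p - 1) * k₀) / (((p - 1) * k₀ : ℕ) : ℚ)) =
      -(1 + (padicValNat p k₀ : ℤ)) := by
  haveI : Fact p.Prime := ⟨hp⟩
  have hp3 : 3 ≤ p := by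
    rcases hodd with ⟨t, ht⟩
    have := hp.two_le
    omega
  set n := (p - 1) * k₀ with hn
  have hn1 : 1 ≤ n := by
    have : 1 ≤ p - 1 := by omega
    exact Nat.one_le_iff_ne_zero.mpr (by positivity)
  have hdvd : (p - 1) ∣ n := Dvd.intro k₀ rfl
  obtain ⟨hB0, hBval⟩ := aux_val_bernoulli p n hp hp3 hdvd hn1
  have hn0 : ((n : ℕ) : ℚ) ≠ 0 := Nat.cast_ne_zero.mpr (by omega)
  rw [padicValRat.div hB0 hn0, hBval, padicValRat.of_nat]
  have hvn : padicValNat p n = padicValNat p k₀ := by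
    have hp2 : 2 ≤ p := hp.two_le
    rw [hn, padicValNat.mul (by omega) (by omega),
      padicValNat.eq_zero_of_not_dvd (by
        intro hd
        have := Nat.le_of_dvd (by omega) hd
        omega)]
    omega
  rw [hvn]
  ring
end
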